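/- In a graph G consisting of r ≥ 2 odd cycles of lengths n_1,…,n_r glued together at a single common vertex, the spanning subgraphs with all |V| vertices and |V| edges that are odd saturated forests are exactly the connected subgraphs obtained by deleting one edge from each of r−1 of the cycles; in particular there are exactly ∑_{i=1}^r ∏_{j≠i} n_j such subgraphs. -/

import Mathlib

/-- A finite multigraph: loops and multiple edges are allowed.  Each edge `e`
has two (possibly equal) endpoints `fst e` and `snd e`. -/
structure Multigraph where
  V : Type
  E : Type
  [fintV : Fintype V]
  [fintE : Fintype E]
  [decV : DecidableEq V]
  fst : E → V
  snd : E → V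

attribute [instance] Multigraph.fintV Multigraph.fintE Multigraph.decV

namespace Multigraph

/-- The unoriented incidence matrix: entry `1` for an incidence of a non-loop
edge, `2` for a loop at the vertex, `0` otherwise. -/
def inc (G : Multigraph) : Matrix G.V G.E ℚ := fun v e =>
  (if G.fst e = v then 1 else 0) + (if G.snd e = v then 1 else 0)

/-- A cycle of length `l ≥ 1` in a multigraph: distinct vertices `c 0, …, c (l-1)`
and distinct edges `f 0, …, f (l-1)`, edge `f i` joining `c i` and `c (i+1)`.
A loop is a cycle of length `1`, two parallel edges form a cycle of length `2`. -/
def IsCycle (G : Multigraph) (l : ℕ) (c : ZMod l → G.V) (f : ZMod l → G.E) : Prop :=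
  0 < l ∧ Function.Injective c ∧ Function.Injective f ∧
    ∀ i, (G.fst (f i) = c i ∧ G.snd (f i) = c (i + 1)) ∨
      (G.fst (f i) = c (i + 1) ∧ G.snd (f i) = c i)

/-- Adjacency via some edge. -/
def Adj (G : Multigraph) (u v : G.V) : Prop :=
  ∃ e, (G.fst e = u ∧ G.snd e = v) ∨ (G.fst e = v ∧ G.snd e = u)

/-- The setoid of connected components. -/
def compSetoid (G : Multigraph) : Setoid G.V :=
  ⟨Relation.EqvGen G.Adj, Relation.EqvGen.is_equivalence _⟩

/-- The connected components of `G`. -/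
def Comp (G : Multigraph) : Type := Quotient G.compSetoid

/-- Number of connected components. -/
noncomputable def numComp (G : Multigraph) : ℕ := Nat.card G.Comp

/-- `G` is a saturated forest iff every connected component has equally many
vertices and edges (equivalently: every component contains exactly one cycle). -/
def IsSaturatedForest (G : Multigraph) : Prop :=
  ∀ K : G.Comp,
    Nat.card {v : G.V // Quotient.mk G.compSetoid v = K} =
      Nat.card {e : G.E // Quotient.mk G.compSetoid (G.fst e) = K}

/-- `G` contains no even cycle. -/
def NoEvenCycle (G : Multigraph) : Prop :=
  ∀ l c f, G.IsCycle l c f → Odd l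

/-- An odd saturated forest: every component contains exactly one cycle and all
cycles are odd. -/
def IsOddSaturatedForest (G : Multigraph) : Prop :=
  G.IsSaturatedForest ∧ G.NoEvenCycle

end Multigraph

namespace Multigraph

/-- `G` is connected. -/
def Preconnected (G : Multigraph) : Prop := ∀ u v, Relation.EqvGen G.Adj u v

/-- The spanning subgraph of `G` obtained by keeping the edges in `S`. -/
def keep (G : Multigraph) (S : Finset G.E) [DecidableEq G.E] : Multigraph where
  V := G.V
  E := {e // e ∈ S}
  fst e := G.fst e.1
  snd e := G.snd e.1

end Multigraph

open Multigraph

/-- The graph consisting of `r` cycles of lengths `n 0, …, n (r-1)` glued together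
at a common vertex (`none` is the common vertex, the vertex `some ⟨j, k⟩` is the
`(k+1)`-st vertex of the `j`-th cycle, and the edge `⟨j, k⟩` joins the `k`-th and
`(k+1)`-st vertices of the `j`-th cycle, indices mod `n j`). -/
def gluedCycles (r : ℕ) (n : Fin r → ℕ) (hpos : ∀ j, 0 < n j) : Multigraph where
  V := Option (Σ j : Fin r, Fin (n j - 1))
  E := Σ j : Fin r, Fin (n j)
  fst e := if h : (e.2 : ℕ) = 0 then none else
    some ⟨e.1, ⟨(e.2 : ℕ) - 1, by omega⟩⟩
  snd e := if h : ((e.2 : ℕ) + 1) % n e.1 = 0 then none else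
    some ⟨e.1, ⟨((e.2 : ℕ) + 1) % n e.1 - 1, by
      have := Nat.mod_lt ((e.2 : ℕ) + 1) (hpos e.1); omega⟩⟩

instance (r : ℕ) (n : Fin r → ℕ) (hpos : ∀ j, 0 < n j) :
    DecidableEq (gluedCycles r n hpos).E :=
  inferInstanceAs (DecidableEq (Σ j : Fin r, Fin (n j)))

section Glued

variable {r : ℕ} {n : Fin r → ℕ} {hpos : ∀ j, 0 < n j}

lemma fst_mk (j : Fin r) (k : Fin (n j)) :
    (gluedCycles r n hpos).fst ⟨j, k⟩ =
      if h : (k : ℕ) = 0 then none else some ⟨j, ⟨(k : ℕ) - 1, by omega⟩⟩ := rfl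

lemma snd_mk (j : Fin r) (k : Fin (n j)) :
    (gluedCycles r n hpos).snd ⟨j, k⟩ =
      if h : ((k : ℕ) + 1) % n j = 0 then none else
        some ⟨j, ⟨((k : ℕ) + 1) % n j - 1, by
          have := Nat.mod_lt ((k : ℕ) + 1) (hpos j); omega⟩⟩ := rfl

lemma snd_mk' (j : Fin r) (k : Fin (n j)) (h : (k : ℕ) + 1 < n j) :
    (gluedCycles r n hpos).snd ⟨j, k⟩ = some ⟨j, ⟨(k : ℕ), by omega⟩⟩ := by
  simp only [snd_mk, Nat.mod_eq_of_lt h]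
  simp
  rfl

lemma snd_mk_last (j : Fin r) (k : Fin (n j)) (h : (k : ℕ) + 1 = n j) :
    (gluedCycles r n hpos).snd ⟨j, k⟩ = none := by
  simp only [snd_mk, h, Nat.mod_self]
  simp
  rfl

lemma fst_mk_zero (j : Fin r) (k : Fin (n j)) (h : (k : ℕ) = 0) :
    (gluedCycles r n hpos).fst ⟨j, k⟩ = none := by
  simp [fst_mk, h]
  rfl

lemma fst_mk_pos (j : Fin r) (k : Fin (n j)) (h : 0 < (k : ℕ)) :
    (gluedCycles r n hpos).fst ⟨j, k⟩ = some ⟨j, ⟨(k : ℕ) - 1, by omega⟩⟩ := by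
  simp [fst_mk, Nat.pos_iff_ne_zero.mp h]
  rfl

/-- The only edges incident to a non-base vertex `some ⟨j,t⟩` are `(j,t)` and `(j,t+1)`. -/
lemma incident_some {e : (gluedCycles r n hpos).E} {j : Fin r} {t : Fin (n j - 1)}
    (h : (gluedCycles r n hpos).fst e = some ⟨j, t⟩ ∨
         (gluedCycles r n hpos).snd e = some ⟨j, t⟩) :
    e.1 = j ∧ ((e.2 : ℕ) = (t : ℕ) ∨ (e.2 : ℕ) = (t : ℕ) + 1) := by
  obtain ⟨j', k⟩ := e
  rcases h with h | h
  · rw [fst_mk] at h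
    by_cases hk : (k : ℕ) = 0
    · rw [dif_pos hk] at h; exact absurd h (by simp)
    · rw [dif_neg hk] at h; replace h := Option.some.inj h
      obtain ⟨rfl, h2⟩ := Sigma.mk.inj_iff.mp h
      have h3 := congrArg Fin.val (eq_of_heq h2)
      simp only [] at h3
      have hk2 : (k : ℕ) < n j' := k.2
      exact ⟨rfl, Or.inr (show (k : ℕ) = (t : ℕ) + 1 by omega)⟩
  · rw [snd_mk] at h
    by_cases hk : ((k : ℕ) + 1) % n j' = 0
    · rw [dif_pos hk] at h; exact absurd h (by simp)
    · rw [dif_neg hk] at h; replace h := Option.some.inj h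
      obtain ⟨rfl, h2⟩ := Sigma.mk.inj_iff.mp h
      have h3 : ((k : ℕ) + 1) % n j' - 1 = (t : ℕ) := congrArg Fin.val (eq_of_heq h2)
      refine ⟨rfl, Or.inl (show (k : ℕ) = (t : ℕ) from ?_)⟩
      have hk1 : (k : ℕ) < n j' := k.2
      rcases Nat.lt_or_ge ((k : ℕ) + 1) (n j') with h' | h'
      · rw [Nat.mod_eq_of_lt h'] at h3 hk; omega
      · have he : (k : ℕ) + 1 = n j' := by omega
        rw [he, Nat.mod_self] at hk; omega

end Glued
section Glued1b

variable {r : ℕ} {n : Fin r → ℕ} {hpos : ∀ j, 0 < n j}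

lemma fst_edge_none (j : Fin r) (h : 0 < n j) :
    (gluedCycles r n hpos).fst ⟨j, ⟨0, h⟩⟩ = none := rfl

lemma fst_succ (j : Fin r) (t : ℕ) (h : t + 1 < n j) (h' : t < n j - 1) :
    (gluedCycles r n hpos).fst ⟨j, ⟨t + 1, h⟩⟩ = some ⟨j, ⟨t, h'⟩⟩ := by
  rw [fst_mk, dif_neg (by simp)]
  rfl

lemma snd_edge (j : Fin r) (k : ℕ) (h : k < n j) (hlt : k + 1 < n j) (h' : k < n j - 1) :
    (gluedCycles r n hpos).snd ⟨j, ⟨k, h⟩⟩ = some ⟨j, ⟨k, h'⟩⟩ := by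
  rw [snd_mk]
  have hm : ((⟨k, h⟩ : Fin (n j)) : ℕ) + 1 = k + 1 := rfl
  rw [dif_neg (by rw [hm, Nat.mod_eq_of_lt hlt]; omega)]
  simp only [hm, Nat.mod_eq_of_lt hlt, Option.some_inj]
  rfl

lemma snd_edge_none (j : Fin r) (k : ℕ) (h : k < n j) (hk : k + 1 = n j) :
    (gluedCycles r n hpos).snd ⟨j, ⟨k, h⟩⟩ = none := by
  rw [snd_mk]
  have hm : ((⟨k, h⟩ : Fin (n j)) : ℕ) + 1 = k + 1 := rfl
  rw [dif_pos (by rw [hm, hk, Nat.mod_self])]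

end Glued1b
section Glued2

variable {r : ℕ} {n : Fin r → ℕ} {hpos : ∀ j, 0 < n j} {D : Finset (gluedCycles r n hpos).E}

lemma adj_keep (e : (gluedCycles r n hpos).E) (he : e ∉ D) {u v}
    (h : ((gluedCycles r n hpos).fst e = u ∧ (gluedCycles r n hpos).snd e = v) ∨
         ((gluedCycles r n hpos).fst e = v ∧ (gluedCycles r n hpos).snd e = u)) :
    ((gluedCycles r n hpos).keep Dᶜ).Adj u v :=
  ⟨⟨e, Finset.mem_compl.mpr he⟩, h⟩

lemma chain_down {j : Fin r} : ∀ (t : ℕ) (ht : t < n j - 1),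
    (∀ (k : ℕ) (h : k < n j), k ≤ t → (⟨j, ⟨k, h⟩⟩ : (gluedCycles r n hpos).E) ∉ D) →
    Relation.EqvGen ((gluedCycles r n hpos).keep Dᶜ).Adj (some ⟨j, ⟨t, ht⟩⟩) none := by
  intro t
  induction t with
  | zero =>
    intro ht hk
    refine Relation.EqvGen.rel _ _ (adj_keep ⟨j, ⟨0, by omega⟩⟩ (hk 0 (by omega) le_rfl)
      (Or.inr ⟨fst_edge_none j (by omega), snd_edge j 0 (by omega) (by omega) ht⟩))
  | succ t ih =>
    intro ht hk
    exact Relation.EqvGen.trans _ (some ⟨j, ⟨t, by omega⟩⟩) _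
      (Relation.EqvGen.rel _ _
        (adj_keep ⟨j, ⟨t + 1, by omega⟩⟩ (hk (t+1) (by omega) le_rfl)
          (Or.inr ⟨fst_succ j t (by omega) (by omega),
            snd_edge j (t+1) (by omega) (by omega) ht⟩)))
      (ih (by omega) (fun k h hk' => hk k h (by omega)))

lemma chain_up {j : Fin r} : ∀ (d t : ℕ) (ht : t < n j - 1), t + d + 2 = n j →
    (∀ (k : ℕ) (h : k < n j), t + 1 ≤ k → (⟨j, ⟨k, h⟩⟩ : (gluedCycles r n hpos).E) ∉ D) →
    Relation.EqvGen ((gluedCycles r n hpos).keep Dᶜ).Adj (some ⟨j, ⟨t, ht⟩⟩) none := by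
  intro d
  induction d with
  | zero =>
    intro t ht he hk
    exact Relation.EqvGen.rel _ _
      (adj_keep ⟨j, ⟨t + 1, by omega⟩⟩ (hk (t+1) (by omega) le_rfl)
        (Or.inl ⟨fst_succ j t (by omega) ht, snd_edge_none j (t+1) (by omega) (by omega)⟩))
  | succ d ih =>
    intro t ht he hk
    exact Relation.EqvGen.trans _ (some ⟨j, ⟨t + 1, by omega⟩⟩) _
      (Relation.EqvGen.rel _ _
        (adj_keep ⟨j, ⟨t + 1, by omega⟩⟩ (hk (t+1) (by omega) le_rfl)
          (Or.inl ⟨fst_succ j t (by omega) ht,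
            snd_edge j (t+1) (by omega) (by omega) (by omega)⟩)))
      (ih (t+1) (by omega) (by omega) (fun k h hk' => hk k h (by omega)))

lemma conn_to_base (hD : ∀ j : Fin r, (D.filter (fun e => e.1 = j)).card ≤ 1)
    (v : ((gluedCycles r n hpos).keep Dᶜ).V) :
    Relation.EqvGen ((gluedCycles r n hpos).keep Dᶜ).Adj v none := by
  match v with
  | none => exact Relation.EqvGen.refl none
  | some ⟨j, t⟩ =>
    by_cases hex : ∃ k : Fin (n j), (k : ℕ) ≤ (t : ℕ) ∧ (⟨j, k⟩ : (gluedCycles r n hpos).E) ∈ D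
    · obtain ⟨k0, hk0, hk0D⟩ := hex
      have ht : (t : ℕ) < n j - 1 := t.2
      have : (some ⟨j, ⟨(t : ℕ), ht⟩⟩ : ((gluedCycles r n hpos).keep Dᶜ).V) = some ⟨j, t⟩ := rfl
      rw [← this]
      refine chain_up (n j - 2 - (t : ℕ)) (t : ℕ) ht (by omega) ?_
      intro k h hk hkD
      have heq := Finset.card_le_one.mp (hD j) _ (Finset.mem_filter.mpr ⟨hkD, rfl⟩)
        _ (Finset.mem_filter.mpr ⟨hk0D, rfl⟩)
      have h2 := congrArg Fin.val (eq_of_heq (Sigma.mk.inj_iff.mp heq).2)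
      simp only [] at h2
      omega
    · push_neg at hex
      have ht : (t : ℕ) < n j - 1 := t.2
      have : (some ⟨j, ⟨(t : ℕ), ht⟩⟩ : ((gluedCycles r n hpos).keep Dᶜ).V) = some ⟨j, t⟩ := rfl
      rw [← this]
      exact chain_down (t : ℕ) ht (fun k h hk => hex ⟨k, h⟩ hk)

lemma preconn_of_struct {i : Fin r} (hi1 : ∀ e ∈ D, e.1 ≠ i)
    (hi2 : ∀ j, j ≠ i → (D.filter (fun e => e.1 = j)).card = 1) :
    ((gluedCycles r n hpos).keep Dᶜ).Preconnected := by
  have hD : ∀ j : Fin r, (D.filter (fun e => e.1 = j)).card ≤ 1 := by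
    intro j
    by_cases hj : j = i
    · subst hj
      have : D.filter (fun e => e.1 = j) = ∅ :=
        Finset.filter_eq_empty_iff.mpr (fun e he => hi1 e he)
      simp [this]
    · exact (hi2 j hj).le
  intro u v
  exact Relation.EqvGen.trans _ _ _ (conn_to_base hD u)
    (Relation.EqvGen.symm _ _ (conn_to_base hD v))

end Glued2
section MG

lemma Multigraph.adj_symm (H : Multigraph) {u v : H.V} (h : H.Adj u v) : H.Adj v u := by
  obtain ⟨e, h⟩ := h; exact ⟨e, h.symm⟩

lemma Multigraph.eqv_invariant (H : Multigraph) (P : H.V → Prop)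
    (hP : ∀ u v, H.Adj u v → P u → P v) {u v : H.V}
    (h : Relation.EqvGen H.Adj u v) : P u ↔ P v := by
  induction h with
  | rel x y hxy => exact ⟨hP x y hxy, hP y x (H.adj_symm hxy)⟩
  | refl => exact Iff.rfl
  | symm _ _ _ ih => exact ih.symm
  | trans _ _ _ _ _ ih1 ih2 => exact ih1.trans ih2

lemma Multigraph.eqvGen_of_mk_eq (H : Multigraph) {u v : H.V}
    (h : Quotient.mk H.compSetoid u = Quotient.mk H.compSetoid v) :
    Relation.EqvGen H.Adj u v := Quotient.exact h

lemma Multigraph.mk_eq_of_eqvGen (H : Multigraph) {u v : H.V}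
    (h : Relation.EqvGen H.Adj u v) :
    Quotient.mk H.compSetoid u = Quotient.mk H.compSetoid v := Quotient.sound h

lemma Multigraph.isSaturatedForest_of_preconnected (H : Multigraph)
    (h : H.Preconnected) (hcard : Nat.card H.V = Nat.card H.E) :
    H.IsSaturatedForest := by
  intro K
  obtain ⟨w, rfl⟩ : ∃ w, Quotient.mk H.compSetoid w = K := by
    refine Quotient.inductionOn K (fun w => ⟨w, rfl⟩)
  have hv : ∀ v : H.V, Quotient.mk H.compSetoid v = Quotient.mk H.compSetoid w :=
    fun v => H.mk_eq_of_eqvGen (h v w)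
  rw [Nat.card_congr (Equiv.subtypeUnivEquiv hv),
    Nat.card_congr (Equiv.subtypeUnivEquiv (fun e => hv (H.fst e)))]
  exact hcard

end MG

section Glued3

variable {r : ℕ} {n : Fin r → ℕ} {hpos : ∀ j, 0 < n j} {D : Finset (gluedCycles r n hpos).E}

lemma vmk_eq {j : Fin r} (t t' : ℕ) (h : t < n j - 1) (h' : t' < n j - 1) (he : t = t') :
    (some ⟨j, ⟨t, h⟩⟩ : (gluedCycles r n hpos).V) = some ⟨j, ⟨t', h'⟩⟩ := by subst he; rfl

lemma card_V_glued : Nat.card (gluedCycles r n hpos).V = 1 + ∑ j, (n j - 1) := by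
  rw [Nat.card_eq_fintype_card]
  show Fintype.card (Option (Σ j : Fin r, Fin (n j - 1))) = _
  rw [Fintype.card_option, Fintype.card_sigma]
  simp [Nat.add_comm]

lemma card_keep_E (hr : 1 ≤ r) (hD : D.card = r - 1) :
    Nat.card (((gluedCycles r n hpos).keep Dᶜ).E) = 1 + ∑ j, (n j - 1) := by
  rw [Nat.card_eq_fintype_card]
  show Fintype.card {e // e ∈ Dᶜ} = _
  rw [Fintype.card_coe, Finset.card_compl, hD]
  have h1 : Fintype.card (gluedCycles r n hpos).E = ∑ j, n j := by
    show Fintype.card (Σ j : Fin r, Fin (n j)) = _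
    simp [Fintype.card_sigma]
  rw [h1]
  have h2 : ∑ j, n j = ∑ j, ((n j - 1) + 1) :=
    Finset.sum_congr rfl (fun j _ => by have := hpos j; omega)
  rw [h2, Finset.sum_add_distrib]
  simp [Finset.card_univ]
  omega

lemma saturated_backward (hr : 1 ≤ r) (hD : D.card = r - 1)
    (hpre : ((gluedCycles r n hpos).keep Dᶜ).Preconnected) :
    ((gluedCycles r n hpos).keep Dᶜ).IsSaturatedForest := by
  refine Multigraph.isSaturatedForest_of_preconnected _ hpre ?_
  rw [card_keep_E hr hD]
  exact card_V_glued (hpos := hpos)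

end Glued3
section Glued4

variable {r : ℕ} {n : Fin r → ℕ} {hpos : ∀ j, 0 < n j} {D : Finset (gluedCycles r n hpos).E}

lemma edge_ext {j : Fin r} (k k' : Fin (n j)) (h : (k : ℕ) = (k' : ℕ)) :
    (⟨j, k⟩ : (gluedCycles r n hpos).E) = ⟨j, k'⟩ := by
  have := Fin.ext h; subst this; rfl

lemma vmk_inj {j : Fin r} {t t' : ℕ} {h : t < n j - 1} {h' : t' < n j - 1}
    (he : (some ⟨j, ⟨t, h⟩⟩ : (gluedCycles r n hpos).V) = some ⟨j, ⟨t', h'⟩⟩) : t = t' := by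
  have h2 := congrArg Fin.val (eq_of_heq (Sigma.mk.inj_iff.mp (Option.some.inj he)).2)
  exact h2

lemma emk_inj {j : Fin r} {k k' : ℕ} {h : k < n j} {h' : k' < n j}
    (he : (⟨j, ⟨k, h⟩⟩ : (gluedCycles r n hpos).E) = ⟨j, ⟨k', h'⟩⟩) : k = k' := by
  have h2 := congrArg Fin.val (eq_of_heq (Sigma.mk.inj_iff.mp he).2)
  exact h2

lemma eq_of_fst_eq_some {e : (gluedCycles r n hpos).E} {j : Fin r} {t : Fin (n j - 1)}
    (h : (gluedCycles r n hpos).fst e = some ⟨j, t⟩) :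
    e.1 = j ∧ (e.2 : ℕ) = (t : ℕ) + 1 := by
  obtain ⟨j', k⟩ := e
  rw [fst_mk] at h
  by_cases hk : (k : ℕ) = 0
  · rw [dif_pos hk] at h; exact absurd h (by simp)
  · rw [dif_neg hk] at h; replace h := Option.some.inj h
    obtain ⟨rfl, h2⟩ := Sigma.mk.inj_iff.mp h
    have h3 := congrArg Fin.val (eq_of_heq h2)
    simp only [] at h3
    have hk2 : (k : ℕ) < n j' := k.2
    exact ⟨rfl, show (k : ℕ) = (t : ℕ) + 1 by omega⟩

lemma eq_of_snd_eq_some {e : (gluedCycles r n hpos).E} {j : Fin r} {t : Fin (n j - 1)}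
    (h : (gluedCycles r n hpos).snd e = some ⟨j, t⟩) :
    e.1 = j ∧ (e.2 : ℕ) = (t : ℕ) := by
  obtain ⟨j', k⟩ := e
  rw [snd_mk] at h
  by_cases hk : ((k : ℕ) + 1) % n j' = 0
  · rw [dif_pos hk] at h; exact absurd h (by simp)
  · rw [dif_neg hk] at h; replace h := Option.some.inj h
    obtain ⟨rfl, h2⟩ := Sigma.mk.inj_iff.mp h
    have h3 : ((k : ℕ) + 1) % n j' - 1 = (t : ℕ) := congrArg Fin.val (eq_of_heq h2)
    refine ⟨rfl, show (k : ℕ) = (t : ℕ) from ?_⟩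
    have hk1 : (k : ℕ) < n j' := k.2
    rcases Nat.lt_or_ge ((k : ℕ) + 1) (n j') with h' | h'
    · rw [Nat.mod_eq_of_lt h'] at h3 hk; omega
    · have he : (k : ℕ) + 1 = n j' := by omega
      rw [he, Nat.mod_self] at hk; omega

lemma arc_adj_closed {j : Fin r} {a1 a2 : ℕ} (h1 : a1 < a2) (h2 : a2 < n j)
    {ha1 : a1 < n j}
    (hD1 : (⟨j, ⟨a1, ha1⟩⟩ : (gluedCycles r n hpos).E) ∈ D)
    (hD2 : (⟨j, ⟨a2, h2⟩⟩ : (gluedCycles r n hpos).E) ∈ D)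
    {u v : ((gluedCycles r n hpos).keep Dᶜ).V}
    (hadj : ((gluedCycles r n hpos).keep Dᶜ).Adj u v)
    (hu : ∃ (t : ℕ) (h : t < n j - 1), a1 ≤ t ∧ t < a2 ∧ u = some ⟨j, ⟨t, h⟩⟩) :
    ∃ (t : ℕ) (h : t < n j - 1), a1 ≤ t ∧ t < a2 ∧ v = some ⟨j, ⟨t, h⟩⟩ := by
  obtain ⟨t, ht, ht1, ht2, rfl⟩ := hu
  obtain ⟨⟨e, he⟩, hor⟩ := hadj
  rw [Finset.mem_compl] at he
  rcases hor with ⟨hf, hs⟩ | ⟨hf, hs⟩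
  · -- fst e = some(j,t), snd e = v ; so e = (j, t+1)
    obtain ⟨hj, hk⟩ := eq_of_fst_eq_some hf
    obtain ⟨j', k⟩ := e
    simp only [] at hj hk
    subst hj
    have hne : (k : ℕ) ≠ a2 := fun hh =>
      he ((edge_ext k ⟨a2, h2⟩ hh) ▸ hD2)
    have hlt : (t : ℕ) + 1 < a2 := by omega
    refine ⟨t + 1, by omega, by omega, hlt, ?_⟩
    have hsnd := snd_mk' (hpos := hpos) j' k (by omega)
    have hs' : (gluedCycles r n hpos).snd ⟨j', k⟩ = v := hs
    rw [← hs', hsnd]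
    exact vmk_eq _ _ _ _ (by omega)
  · -- snd e = some(j,t), fst e = v ; so e = (j, t)
    obtain ⟨hj, hk⟩ := eq_of_snd_eq_some hs
    obtain ⟨j', k⟩ := e
    simp only [] at hj hk
    subst hj
    have hne : (k : ℕ) ≠ a1 := fun hh =>
      he ((edge_ext k ⟨a1, ha1⟩ hh) ▸ hD1)
    have hgt : a1 < t := by omega
    refine ⟨t - 1, by omega, by omega, by omega, ?_⟩
    have hfst := fst_mk_pos (hpos := hpos) j' k (by omega)
    have hf' : (gluedCycles r n hpos).fst ⟨j', k⟩ = v := hf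
    rw [← hf', hfst]
    exact vmk_eq _ _ _ _ (by omega)

lemma arc_conn {j : Fin r} {a1 a2 : ℕ} (h1 : a1 < a2) (h2 : a2 < n j)
    (hmid : ∀ (k : ℕ) (h : k < n j), a1 < k → k < a2 →
      (⟨j, ⟨k, h⟩⟩ : (gluedCycles r n hpos).E) ∉ D) :
    ∀ (d : ℕ) (hd : a1 + d < a2) (h : a1 + d < n j - 1) (h' : a1 < n j - 1),
    Relation.EqvGen ((gluedCycles r n hpos).keep Dᶜ).Adj
      (some ⟨j, ⟨a1 + d, h⟩⟩) (some ⟨j, ⟨a1, h'⟩⟩) := by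
  intro d
  induction d with
  | zero => intro hd h h'; exact Relation.EqvGen.refl _
  | succ d ih =>
    intro hd h h'
    refine Relation.EqvGen.trans _ (some ⟨j, ⟨a1 + d, by omega⟩⟩) _
      (Relation.EqvGen.rel _ _
        (adj_keep ⟨j, ⟨a1 + d + 1, by omega⟩⟩ (hmid (a1 + d + 1) (by omega) (by omega) (by omega))
          (Or.inr ⟨fst_succ j (a1 + d) (by omega) (by omega),
            snd_edge j (a1 + d + 1) (by omega) (by omega) (by omega)⟩)))
      (ih (by omega) (by omega) h')

lemma not_two_deleted (hsat : ((gluedCycles r n hpos).keep Dᶜ).IsSaturatedForest)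
    {j : Fin r} {a1 a2 : ℕ} (h1 : a1 < a2) (h2 : a2 < n j) {ha1 : a1 < n j}
    (hD1 : (⟨j, ⟨a1, ha1⟩⟩ : (gluedCycles r n hpos).E) ∈ D)
    (hD2 : (⟨j, ⟨a2, h2⟩⟩ : (gluedCycles r n hpos).E) ∈ D)
    (hmid : ∀ (k : ℕ) (h : k < n j), a1 < k → k < a2 →
      (⟨j, ⟨k, h⟩⟩ : (gluedCycles r n hpos).E) ∉ D) : False := by
  have ha1' : a1 < n j - 1 := by omega
  set H := (gluedCycles r n hpos).keep Dᶜ with hH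
  set base : H.V := some ⟨j, ⟨a1, ha1'⟩⟩ with hbase
  set K := Quotient.mk H.compSetoid base with hK
  -- the predicate describing the component of `base`
  set P : H.V → Prop := fun v =>
    ∃ (t : ℕ) (h : t < n j - 1), a1 ≤ t ∧ t < a2 ∧ v = some ⟨j, ⟨t, h⟩⟩ with hP
  have hPc : ∀ u v, H.Adj u v → P u → P v :=
    fun u v h hu => arc_adj_closed h1 h2 hD1 hD2 h hu
  have hPbase : P base := ⟨a1, ha1', le_rfl, h1, rfl⟩
  have hPK : ∀ v : H.V, Quotient.mk H.compSetoid v = K → P v := by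
    intro v hv
    exact (H.eqv_invariant P hPc (H.eqvGen_of_mk_eq hv)).mpr hPbase
  have hKP : ∀ (t : ℕ) (h : t < n j - 1), a1 ≤ t → t < a2 →
      Quotient.mk H.compSetoid (some ⟨j, ⟨t, h⟩⟩) = K := by
    intro t h hta htb
    refine H.mk_eq_of_eqvGen ?_
    have := arc_conn h1 h2 hmid (t - a1) (by omega) (by omega) ha1'
    have he : a1 + (t - a1) = t := by omega
    rw [show (some ⟨j, ⟨t, h⟩⟩ : H.V) = some ⟨j, ⟨a1 + (t - a1), by omega⟩⟩ from
      vmk_eq _ _ _ _ (by omega)]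
    exact this
  -- vertex count of the component K
  have hvcard : Nat.card {v : H.V // Quotient.mk H.compSetoid v = K} = a2 - a1 := by
    have hbij : Function.Bijective
        (fun m : Fin (a2 - a1) =>
          (⟨some ⟨j, ⟨a1 + (m : ℕ), by omega⟩⟩,
            hKP _ _ (by omega) (by omega)⟩ :
            {v : H.V // Quotient.mk H.compSetoid v = K})) := by
      constructor
      · intro m m' hmm
        have := vmk_inj (congrArg Subtype.val hmm)
        exact Fin.ext (by omega)
      · rintro ⟨v, hv⟩
        obtain ⟨t, ht, ht1, ht2, rfl⟩ := hPK v hv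
        refine ⟨⟨t - a1, by omega⟩, Subtype.ext ?_⟩
        exact vmk_eq _ _ _ _ (show a1 + (t - a1) = t by omega)
    rw [← Nat.card_eq_of_bijective _ hbij, Nat.card_eq_fintype_card, Fintype.card_fin]
  -- edge count of the component K
  have hecard : Nat.card {e : H.E // Quotient.mk H.compSetoid (H.fst e) = K} = a2 - a1 - 1 := by
    have hbij : Function.Bijective
        (fun m : Fin (a2 - a1 - 1) =>
          (⟨⟨⟨j, ⟨a1 + (m : ℕ) + 1, by omega⟩⟩,
              Finset.mem_compl.mpr (hmid _ (by omega) (by omega) (by omega))⟩,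
            by
              show Quotient.mk H.compSetoid
                ((gluedCycles r n hpos).fst ⟨j, ⟨a1 + (m : ℕ) + 1, by omega⟩⟩) = K
              rw [fst_succ j (a1 + (m : ℕ)) (by omega) (by omega)]
              exact hKP _ _ (by omega) (by omega)⟩ :
            {e : H.E // Quotient.mk H.compSetoid (H.fst e) = K})) := by
      constructor
      · intro m m' hmm
        have h1 := congrArg
          (fun x : {e : H.E // Quotient.mk H.compSetoid (H.fst e) = K} =>
            ((x.1.1.snd : ℕ))) hmm
        dsimp only at h1
        exact Fin.ext (by omega)
      · rintro ⟨⟨e, he⟩, hv⟩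
        have hPf : P (H.fst ⟨e, he⟩) := hPK _ hv
        obtain ⟨t, ht, ht1, ht2, hf⟩ := hPf
        obtain ⟨hj, hk⟩ := eq_of_fst_eq_some (e := e) hf
        obtain ⟨j', k⟩ := e
        simp only [] at hj hk
        subst hj
        replace he : (⟨j', k⟩ : (gluedCycles r n hpos).E) ∉ D := Finset.mem_compl.mp he
        have hne : (k : ℕ) ≠ a2 := fun hh => he ((edge_ext k ⟨a2, h2⟩ hh) ▸ hD2)
        refine ⟨⟨t - a1, by omega⟩, Subtype.ext (Subtype.ext ?_)⟩
        exact edge_ext _ _ (show a1 + (t - a1) + 1 = (k : ℕ) by omega)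
    rw [← Nat.card_eq_of_bijective _ hbij, Nat.card_eq_fintype_card, Fintype.card_fin]
  have := hsat K
  rw [hvcard, hecard] at this
  omega

end Glued4
section Glued5

variable {r : ℕ} {n : Fin r → ℕ} {hpos : ∀ j, 0 < n j} {D : Finset (gluedCycles r n hpos).E}

lemma at_most_one_deleted (hsat : ((gluedCycles r n hpos).keep Dᶜ).IsSaturatedForest)
    (j : Fin r) : (D.filter (fun e => e.1 = j)).card ≤ 1 := by
  by_contra hcon
  push_neg at hcon
  -- the set of deleted indices in cycle j
  set S : Finset ℕ := (D.filter (fun e => e.1 = j)).image (fun e => (e.2 : ℕ)) with hS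
  have hmemS : ∀ m ∈ S, ∃ h : m < n j, (⟨j, ⟨m, h⟩⟩ : (gluedCycles r n hpos).E) ∈ D := by
    intro m hm
    rw [hS, Finset.mem_image] at hm
    obtain ⟨e, he, hme⟩ := hm
    rw [Finset.mem_filter] at he
    obtain ⟨j', k⟩ := e
    obtain ⟨heD, rfl⟩ := he
    have hk : (k : ℕ) < n j' := k.2
    subst hme
    exact ⟨hk, by rwa [edge_ext (⟨(k : ℕ), hk⟩ : Fin (n j')) k rfl]⟩
  have hgetS : ∀ (m : ℕ) (h : m < n j), (⟨j, ⟨m, h⟩⟩ : (gluedCycles r n hpos).E) ∈ D → m ∈ S := by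
    intro m h hm
    rw [hS, Finset.mem_image]
    exact ⟨⟨j, ⟨m, h⟩⟩, Finset.mem_filter.mpr ⟨hm, rfl⟩, rfl⟩
  have hcardS : 2 ≤ S.card := by
    rw [hS, Finset.card_image_of_injOn]
    · exact hcon
    · intro e he e' he' hee
      rw [Finset.mem_coe, Finset.mem_filter] at he he'
      obtain ⟨j1, k1⟩ := e
      obtain ⟨j2, k2⟩ := e'
      obtain ⟨-, h1⟩ := he
      obtain ⟨-, h2⟩ := he'
      simp only [] at h1 h2 hee
      subst h1; subst h2
      exact edge_ext k1 k2 hee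
  have hne : S.Nonempty := Finset.card_pos.mp (by omega)
  set a1 := S.min' hne with ha1
  have ha1S : a1 ∈ S := S.min'_mem hne
  have hne2 : (S.erase a1).Nonempty := by
    rw [← Finset.card_pos, Finset.card_erase_of_mem ha1S]; omega
  set a2 := (S.erase a1).min' hne2 with ha2
  have ha2S' : a2 ∈ S.erase a1 := (S.erase a1).min'_mem hne2
  have ha2S : a2 ∈ S := Finset.mem_of_mem_erase ha2S'
  have h12 : a1 < a2 :=
    lt_of_le_of_ne (S.min'_le _ ha2S) (Ne.symm (Finset.ne_of_mem_erase ha2S'))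
  obtain ⟨hlt1, hD1⟩ := hmemS a1 ha1S
  obtain ⟨hlt2, hD2⟩ := hmemS a2 ha2S
  refine not_two_deleted hsat h12 hlt2 hD1 hD2 ?_
  intro k hk hk1 hk2 hkD
  have hkS : k ∈ S := hgetS k hk hkD
  have : a2 ≤ k := (S.erase a1).min'_le _ (Finset.mem_erase.mpr ⟨by omega, hkS⟩)
  omega

lemma structure_of_saturated (hr : 2 ≤ r) (hD : D.card = r - 1)
    (hsat : ((gluedCycles r n hpos).keep Dᶜ).IsSaturatedForest) :
    ∃ i : Fin r, (∀ e ∈ D, e.1 ≠ i) ∧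
      ∀ j, j ≠ i → (D.filter (fun e => e.1 = j)).card = 1 := by
  have hle := at_most_one_deleted hsat
  have hsum : ∑ j : Fin r, (D.filter (fun e => e.1 = j)).card = r - 1 := by
    rw [← hD]
    exact (Finset.card_eq_sum_card_fiberwise (fun e _ => Finset.mem_univ e.1)).symm
  have hex : ∃ i : Fin r, (D.filter (fun e => e.1 = i)).card = 0 := by
    by_contra hcon
    push_neg at hcon
    have h1 : ∀ j : Fin r, (D.filter (fun e => e.1 = j)).card = 1 :=
      fun j => le_antisymm (hle j) (Nat.one_le_iff_ne_zero.mpr (hcon j))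
    rw [Finset.sum_congr rfl (fun j _ => h1 j), Finset.sum_const, smul_eq_mul, mul_one,
      Finset.card_univ, Fintype.card_fin] at hsum
    omega
  obtain ⟨i, hi⟩ := hex
  have hiempty : D.filter (fun e => e.1 = i) = ∅ := Finset.card_eq_zero.mp hi
  refine ⟨i, ?_, ?_⟩
  · intro e he hei
    have : e ∈ D.filter (fun e => e.1 = i) := Finset.mem_filter.mpr ⟨he, hei⟩
    rw [hiempty] at this
    exact absurd this (Finset.notMem_empty e)
  · intro j hj
    by_contra hcon
    have hj0 : (D.filter (fun e => e.1 = j)).card = 0 := by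
      have := hle j; omega
    have hsum2 : ∑ k ∈ Finset.univ.erase i, (D.filter (fun e => e.1 = k)).card = r - 1 := by
      rw [← hsum, ← Finset.add_sum_erase _ _ (Finset.mem_univ i), hi, zero_add]
    have hlt : ∑ k ∈ Finset.univ.erase i, (D.filter (fun e => e.1 = k)).card <
        ∑ _k ∈ Finset.univ.erase i, 1 := by
      refine Finset.sum_lt_sum (fun k _ => hle k) ⟨j, Finset.mem_erase.mpr ⟨hj, Finset.mem_univ j⟩, by omega⟩
    rw [Finset.sum_const, smul_eq_mul, mul_one, Finset.card_erase_of_mem (Finset.mem_univ i),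
      Finset.card_univ, Fintype.card_fin] at hlt
    omega

end Glued5
section Glued6

variable {r : ℕ} {n : Fin r → ℕ} {hpos : ∀ j, 0 < n j} {D : Finset (gluedCycles r n hpos).E}

lemma edge_eq_mk (e : (gluedCycles r n hpos).E) (j : Fin r) (m : ℕ) (h : m < n j)
    (h1 : e.1 = j) (h2 : (e.2 : ℕ) = m) : e = ⟨j, ⟨m, h⟩⟩ := by
  obtain ⟨j', k⟩ := e
  simp only [] at h1 h2
  subst h1
  exact edge_ext k ⟨m, h⟩ h2

section Cycle

variable {l : ℕ} {c : ZMod l → ((gluedCycles r n hpos).keep Dᶜ).V}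
  {f : ZMod l → ((gluedCycles r n hpos).keep Dᶜ).E}

lemma zmod_sub_one_ne (hl2 : 2 ≤ l) (m : ZMod l) : m - 1 ≠ m := by
  haveI : NeZero l := ⟨by omega⟩
  intro h
  have h2 : (m - 1) - m = 0 := sub_eq_zero.mpr h
  have h3 : (m - 1) - m = -1 := by ring
  rw [h3] at h2
  have h4 : (1 : ZMod l) = 0 := neg_eq_zero.mp h2
  haveI : Fact (1 < l) := ⟨hl2⟩
  have h5 := congrArg ZMod.val h4
  rw [ZMod.val_one, ZMod.val_zero] at h5
  omega

/-- If a cycle of length `≥ 2` visits a non-base vertex, both incident edges are used. -/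
lemma used_both (hl2 : 2 ≤ l)
    (hcyc : ((gluedCycles r n hpos).keep Dᶜ).IsCycle l c f)
    {m : ZMod l} {j : Fin r} {t : Fin (n j - 1)} (hcm : c m = some ⟨j, t⟩) :
    (∃ (mm : ZMod l) (h : (t : ℕ) < n j), (f mm).1 = ⟨j, ⟨(t : ℕ), h⟩⟩) ∧
    (∃ (mm : ZMod l) (h : (t : ℕ) + 1 < n j), (f mm).1 = ⟨j, ⟨(t : ℕ) + 1, h⟩⟩) := by
  obtain ⟨hl, hc, hf, hjoin⟩ := hcyc
  have htb : (t : ℕ) < n j - 1 := t.2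
  -- edge f (m-1) has endpoint c m
  have h1 : (gluedCycles r n hpos).fst (f (m - 1)).1 = some ⟨j, t⟩ ∨
      (gluedCycles r n hpos).snd (f (m - 1)).1 = some ⟨j, t⟩ := by
    rcases hjoin (m - 1) with ⟨hA, hB⟩ | ⟨hA, hB⟩
    · right; rw [show m - 1 + 1 = m from sub_add_cancel m 1] at hB; rw [← hcm]; exact hB
    · left; rw [show m - 1 + 1 = m from sub_add_cancel m 1] at hA; rw [← hcm]; exact hA
  have h2 : (gluedCycles r n hpos).fst (f m).1 = some ⟨j, t⟩ ∨
      (gluedCycles r n hpos).snd (f m).1 = some ⟨j, t⟩ := by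
    rcases hjoin m with ⟨hA, hB⟩ | ⟨hA, hB⟩
    · left; rw [← hcm]; exact hA
    · right; rw [← hcm]; exact hB
  obtain ⟨hj1, hv1⟩ := incident_some h1
  obtain ⟨hj2, hv2⟩ := incident_some h2
  have hne : (f (m - 1)).1 ≠ (f m).1 := by
    intro hh
    exact zmod_sub_one_ne hl2 m (hf (Subtype.ext hh))
  have hvv : ((f (m - 1)).1.2 : ℕ) ≠ ((f m).1.2 : ℕ) := by
    intro hh
    exact hne (edge_eq_mk _ _ ((f m).1.2 : ℕ)
      (lt_of_lt_of_eq (f m).1.2.2 (congrArg n hj2)) hj1 hh |>.trans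
      (edge_eq_mk _ _ _ _ hj2 rfl).symm)
  constructor
  · rcases hv1 with h | h
    · exact ⟨m - 1, by omega, edge_eq_mk _ _ _ _ hj1 h⟩
    · rcases hv2 with h' | h'
      · exact ⟨m, by omega, edge_eq_mk _ _ _ _ hj2 h'⟩
      · exact absurd (h.trans h'.symm) hvv
  · rcases hv1 with h | h
    · rcases hv2 with h' | h'
      · exact absurd (h.trans h'.symm) hvv
      · exact ⟨m, by omega, edge_eq_mk _ _ _ _ hj2 h'⟩
    · exact ⟨m - 1, by omega, edge_eq_mk _ _ _ _ hj1 h⟩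

lemma prop_up (hl2 : 2 ≤ l)
    (hcyc : ((gluedCycles r n hpos).keep Dᶜ).IsCycle l c f)
    {j : Fin r} {k : ℕ} (hk : k + 1 < n j)
    (hu : ∃ (mm : ZMod l) (h : k < n j), (f mm).1 = ⟨j, ⟨k, h⟩⟩) :
    ∃ (mm : ZMod l) (h : k + 1 < n j), (f mm).1 = ⟨j, ⟨k + 1, h⟩⟩ := by
  obtain ⟨mm, h, hfm⟩ := hu
  -- snd (f mm) = some (j, k)
  have hsnd : (gluedCycles r n hpos).snd (f mm).1 = some ⟨j, ⟨k, by omega⟩⟩ := by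
    rw [hfm]; exact snd_mk' j ⟨k, h⟩ hk
  obtain ⟨hl', hc, hf, hjoin⟩ := hcyc
  have hvert : ∃ m', c m' = some ⟨j, ⟨k, by omega⟩⟩ := by
    rcases hjoin mm with ⟨hA, hB⟩ | ⟨hA, hB⟩
    · exact ⟨mm + 1, by rw [← hB]; exact hsnd⟩
    · exact ⟨mm, by rw [← hB]; exact hsnd⟩
  obtain ⟨m', hm'⟩ := hvert
  exact (used_both hl2 ⟨hl', hc, hf, hjoin⟩ hm').2

lemma prop_down (hl2 : 2 ≤ l)
    (hcyc : ((gluedCycles r n hpos).keep Dᶜ).IsCycle l c f)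
    {j : Fin r} {k : ℕ} (hk : 0 < k)
    (hu : ∃ (mm : ZMod l) (h : k < n j), (f mm).1 = ⟨j, ⟨k, h⟩⟩) :
    ∃ (mm : ZMod l) (h : k - 1 < n j), (f mm).1 = ⟨j, ⟨k - 1, h⟩⟩ := by
  obtain ⟨mm, h, hfm⟩ := hu
  have hfst : (gluedCycles r n hpos).fst (f mm).1 = some ⟨j, ⟨k - 1, by omega⟩⟩ := by
    rw [hfm]; exact fst_mk_pos j ⟨k, h⟩ hk
  obtain ⟨hl', hc, hf, hjoin⟩ := hcyc
  have hvert : ∃ m', c m' = some ⟨j, ⟨k - 1, by omega⟩⟩ := by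
    rcases hjoin mm with ⟨hA, hB⟩ | ⟨hA, hB⟩
    · exact ⟨mm, by rw [← hA]; exact hfst⟩
    · exact ⟨mm + 1, by rw [← hA]; exact hfst⟩
  obtain ⟨m', hm'⟩ := hvert
  have := (used_both hl2 ⟨hl', hc, hf, hjoin⟩ hm').1
  exact this

lemma up_all (hl2 : 2 ≤ l)
    (hcyc : ((gluedCycles r n hpos).keep Dᶜ).IsCycle l c f)
    {j : Fin r} {k : ℕ}
    (hu : ∃ (mm : ZMod l) (h : k < n j), (f mm).1 = ⟨j, ⟨k, h⟩⟩) :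
    ∀ k', k ≤ k' → k' < n j → ∃ (mm : ZMod l) (h : k' < n j), (f mm).1 = ⟨j, ⟨k', h⟩⟩ := by
  intro k' hk hk'
  induction k' with
  | zero =>
    have : k = 0 := by omega
    subst this; exact hu
  | succ k' ih =>
    rcases Nat.lt_or_ge k (k' + 1) with h | h
    · have := ih (by omega) (by omega)
      exact prop_up hl2 hcyc hk' this
    · have : k = k' + 1 := by omega
      subst this; exact hu

lemma down_all (hl2 : 2 ≤ l)
    (hcyc : ((gluedCycles r n hpos).keep Dᶜ).IsCycle l c f) {j : Fin r} :
    ∀ (k : ℕ),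
    (∃ (mm : ZMod l) (h : k < n j), (f mm).1 = ⟨j, ⟨k, h⟩⟩) →
    ∀ k' ≤ k, ∃ (mm : ZMod l) (h : k' < n j), (f mm).1 = ⟨j, ⟨k', h⟩⟩ := by
  intro k
  induction k with
  | zero =>
    intro hu k' hk'
    have : k' = 0 := by omega
    subst this; exact hu
  | succ k ih =>
    intro hu k' hk'
    rcases Nat.lt_or_ge k' (k + 1) with h | h
    · refine ih ?_ k' (by omega)
      have := prop_down hl2 hcyc (by omega : 0 < k + 1) hu
      simpa using this
    · have : k' = k + 1 := by omega
      subst this; exact hu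

lemma all_vals (hl2 : 2 ≤ l)
    (hcyc : ((gluedCycles r n hpos).keep Dᶜ).IsCycle l c f)
    {j : Fin r} {k0 : ℕ}
    (hu : ∃ (mm : ZMod l) (h : k0 < n j), (f mm).1 = ⟨j, ⟨k0, h⟩⟩) :
    ∀ k, k < n j → ∃ (mm : ZMod l) (h : k < n j), (f mm).1 = ⟨j, ⟨k, h⟩⟩ := by
  intro k hk
  rcases Nat.lt_or_ge k k0 with h | h
  · exact down_all hl2 hcyc k0 hu k (by omega)
  · exact up_all hl2 hcyc hu k h hk

end Cycle

/-- With one edge deleted from every cycle except the `i`-th, the remaining graph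
has no even cycle. -/
lemma noEvenCycle_of_struct {i : Fin r} (hodd : ∀ j, Odd (n j))
    (hi2 : ∀ j, j ≠ i → (D.filter (fun e => e.1 = j)).card = 1) :
    ((gluedCycles r n hpos).keep Dᶜ).NoEvenCycle := by
  intro l c f hcyc
  rcases Nat.lt_or_ge l 2 with hl2 | hl2
  · have : l = 1 := by have := hcyc.1; omega
    subst this
    exact ⟨0, rfl⟩
  -- every used edge lies in cycle i
  haveI : NeZero l := ⟨by omega⟩
  have hall : ∀ m : ZMod l, (f m).1.1 = i := by
    intro m
    by_contra hne
    obtain ⟨e0, he0⟩ := Finset.card_eq_one.mp (hi2 _ hne)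
    have he0D : e0 ∈ D ∧ e0.1 = (f m).1.1 := by
      have : e0 ∈ D.filter (fun e => e.1 = (f m).1.1) := by rw [he0]; exact Finset.mem_singleton_self e0
      exact Finset.mem_filter.mp this
    have hval : (e0.2 : ℕ) < n (f m).1.1 :=
      lt_of_lt_of_eq e0.2.2 (congrArg n he0D.2)
    have hu0 : ∃ (mm : ZMod l) (h : ((f m).1.2 : ℕ) < n (f m).1.1),
        (f mm).1 = ⟨(f m).1.1, ⟨((f m).1.2 : ℕ), h⟩⟩ :=
      ⟨m, (f m).1.2.2, edge_eq_mk _ _ _ _ rfl rfl⟩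
    obtain ⟨mm, hh, hfmm⟩ := all_vals hl2 hcyc hu0 (e0.2 : ℕ) hval
    have : (f mm).1 = e0 := by
      rw [hfmm]
      exact (edge_eq_mk e0 _ _ hh he0D.2 rfl).symm
    have hmem := (f mm).2
    rw [Finset.mem_compl, this] at hmem
    exact hmem he0D.1
  -- hence the cycle has length exactly `n i`
  set F : ZMod l → Fin (n i) := fun m => ⟨((f m).1.2 : ℕ),
    lt_of_lt_of_eq (f m).1.2.2 (congrArg n (hall m))⟩ with hF
  have hFinj : Function.Injective F := by
    intro m m' hmm
    have hval : ((f m).1.2 : ℕ) = ((f m').1.2 : ℕ) := congrArg Fin.val hmm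
    refine hcyc.2.2.1 (Subtype.ext ?_)
    have h1 := edge_eq_mk (f m).1 i ((f m).1.2 : ℕ)
      (lt_of_lt_of_eq (f m).1.2.2 (congrArg n (hall m))) (hall m) rfl
    have h2 := edge_eq_mk (f m').1 i ((f m).1.2 : ℕ)
      (lt_of_lt_of_eq (f m).1.2.2 (congrArg n (hall m))) (hall m') hval.symm
    rw [h1, h2]
  have hFsurj : Function.Surjective F := by
    intro k
    have hu0 : ∃ (mm : ZMod l) (h : ((f 0).1.2 : ℕ) < n i),
        (f mm).1 = ⟨i, ⟨((f 0).1.2 : ℕ), h⟩⟩ :=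
      ⟨0, lt_of_lt_of_eq (f 0).1.2.2 (congrArg n (hall 0)),
        edge_eq_mk _ _ _ _ (hall 0) rfl⟩
    obtain ⟨mm, hh, hfmm⟩ := all_vals hl2 hcyc hu0 (k : ℕ) k.2
    refine ⟨mm, Fin.ext ?_⟩
    show ((f mm).1.2 : ℕ) = (k : ℕ)
    have := congrArg (fun e : (gluedCycles r n hpos).E => (e.2 : ℕ)) hfmm
    simpa using this
  have hcard : l = n i := by
    have h1 : Fintype.card (ZMod l) = l := ZMod.card l
    have h2 := Fintype.card_le_of_injective F hFinj
    have h3 := Fintype.card_le_of_surjective F hFsurj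
    rw [h1, Fintype.card_fin] at h2 h3
    omega
  rw [hcard]
  exact hodd i

end Glued6
section Glued7

variable {r : ℕ} {n : Fin r → ℕ} {hpos : ∀ j, 0 < n j}

/-- The structural predicate on deletion sets. -/
def structQ {r : ℕ} {n : Fin r → ℕ} {hpos : ∀ j, 0 < n j}
    (D : Finset (gluedCycles r n hpos).E) (i : Fin r) : Prop :=
  (∀ e ∈ D, e.1 ≠ i) ∧ ∀ j, j ≠ i → (D.filter (fun e => e.1 = j)).card = 1

instance (D : Finset (gluedCycles r n hpos).E) (i : Fin r) : Decidable (structQ D i) := by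
  unfold structQ; infer_instance

lemma card_of_struct {D : Finset (gluedCycles r n hpos).E} {i : Fin r}
    (h : structQ D i) : D.card = r - 1 := by
  obtain ⟨hi1, hi2⟩ := h
  have hsum : D.card = ∑ j : Fin r, (D.filter (fun e => e.1 = j)).card :=
    Finset.card_eq_sum_card_fiberwise (fun e _ => Finset.mem_univ e.1)
  have hi0 : (D.filter (fun e => e.1 = i)).card = 0 := by
    rw [Finset.card_eq_zero]
    exact Finset.filter_eq_empty_iff.mpr (fun e he => hi1 e he)
  rw [hsum, ← Finset.add_sum_erase _ _ (Finset.mem_univ i), hi0, zero_add]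
  rw [Finset.sum_congr rfl (fun j hj => hi2 j (Finset.mem_erase.mp hj).1)]
  rw [Finset.sum_const, smul_eq_mul, mul_one, Finset.card_erase_of_mem (Finset.mem_univ i),
    Finset.card_univ, Fintype.card_fin]

lemma main_iff (hr : 2 ≤ r) (hodd : ∀ j, Odd (n j))
    (D : Finset (gluedCycles r n hpos).E) (hD : D.card = r - 1) :
    ((gluedCycles r n hpos).keep Dᶜ).IsOddSaturatedForest ↔
      (((gluedCycles r n hpos).keep Dᶜ).Preconnected ∧ ∃ i : Fin r, structQ D i) := by
  constructor
  · intro h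
    obtain ⟨i, hi1, hi2⟩ := structure_of_saturated hr hD h.1
    exact ⟨preconn_of_struct hi1 hi2, i, hi1, hi2⟩
  · rintro ⟨hpre, i, hi1, hi2⟩
    exact ⟨saturated_backward (by omega) hD hpre, noEvenCycle_of_struct hodd hi2⟩

lemma main_iff' (hr : 2 ≤ r) (hodd : ∀ j, Odd (n j))
    (D : Finset (gluedCycles r n hpos).E) :
    (D.card = r - 1 ∧ ((gluedCycles r n hpos).keep Dᶜ).IsOddSaturatedForest) ↔
      ∃ i : Fin r, structQ D i := by
  constructor
  · rintro ⟨hD, h⟩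
    exact ((main_iff hr hodd D hD).mp h).2
  · rintro ⟨i, hi⟩
    have hD := card_of_struct hi
    refine ⟨hD, (main_iff hr hodd D hD).mpr ⟨preconn_of_struct hi.1 hi.2, i, hi⟩⟩

end Glued7
section Glued8

variable {r : ℕ} {n : Fin r → ℕ} {hpos : ∀ j, 0 < n j}

lemma count_struct_i (i : Fin r) :
    (Finset.univ.filter (fun D : Finset (gluedCycles r n hpos).E => structQ D i)).card =
      ∏ j ∈ Finset.univ.erase i, n j := by
  have hcard : ((Finset.univ.erase i).pi (fun j => (Finset.univ : Finset (Fin (n j))))).card =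
      ∏ j ∈ Finset.univ.erase i, n j := by
    rw [Finset.card_pi]
    exact Finset.prod_congr rfl (fun j _ => by rw [Finset.card_univ, Fintype.card_fin])
  rw [← hcard]
  refine (Finset.card_bij
    (fun g _ => ((Finset.univ.erase i).attach).image
      (fun j => @id (gluedCycles r n hpos).E ⟨j.1, g j.1 j.2⟩)) ?_ ?_ ?_).symm
  · -- maps into the filtered set
    intro g hg
    rw [Finset.mem_filter]
    refine ⟨Finset.mem_univ _, ?_, ?_⟩
    · intro e he
      rw [Finset.mem_image] at he
      obtain ⟨j, -, rfl⟩ := he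
      exact (Finset.mem_erase.mp j.2).1
    · intro j hj
      have hjm : j ∈ Finset.univ.erase i := Finset.mem_erase.mpr ⟨hj, Finset.mem_univ j⟩
      rw [Finset.card_eq_one]
      refine ⟨⟨j, g j hjm⟩, ?_⟩
      refine Finset.eq_singleton_iff_unique_mem.mpr ?_
      constructor
      · exact Finset.mem_filter.mpr ⟨Finset.mem_image.mpr ⟨⟨j, hjm⟩, Finset.mem_attach _ _, rfl⟩, rfl⟩
      · intro e he
        replace he := And.imp_left Finset.mem_image.mp (Finset.mem_filter.mp he)
        obtain ⟨⟨⟨j', hj'⟩, -, rfl⟩, hfst⟩ := he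
        simp only [] at hfst
        subst hfst
        rfl
  · -- injective
    intro g hg g' hg' hgg
    funext j hj
    have hmem : (⟨j, g j hj⟩ : (gluedCycles r n hpos).E) ∈
        ((Finset.univ.erase i).attach).image
          (fun j => @id (gluedCycles r n hpos).E ⟨j.1, g' j.1 j.2⟩) := by
      rw [← hgg]
      exact Finset.mem_image.mpr ⟨⟨j, hj⟩, Finset.mem_attach _ _, rfl⟩
    replace hmem := Finset.mem_image.mp hmem
    obtain ⟨⟨j', hj'⟩, -, heq⟩ := hmem
    obtain ⟨h1, h2⟩ := Sigma.mk.inj_iff.mp heq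
    simp only [] at h1
    subst h1
    exact (eq_of_heq h2).symm
  · -- surjective
    intro D hD
    rw [Finset.mem_filter] at hD
    obtain ⟨-, hQ1, hQ2⟩ := hD
    have H : ∀ j, j ∈ Finset.univ.erase i → ∃ k : Fin (n j),
        (⟨j, k⟩ : (gluedCycles r n hpos).E) ∈ D ∧
          ∀ e ∈ D, e.1 = j → e = (⟨j, k⟩ : (gluedCycles r n hpos).E) := by
      intro j hj
      obtain ⟨e0, he0⟩ := Finset.card_eq_one.mp (hQ2 j (Finset.mem_erase.mp hj).1)
      obtain ⟨he0m, huniq⟩ := Finset.eq_singleton_iff_unique_mem.mp he0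
      rw [Finset.mem_filter] at he0m
      have hek : e0 = (⟨j, ⟨(e0.2 : ℕ), lt_of_lt_of_eq e0.2.2 (congrArg n he0m.2)⟩⟩ :
          (gluedCycles r n hpos).E) :=
        edge_eq_mk e0 j (e0.2 : ℕ) (lt_of_lt_of_eq e0.2.2 (congrArg n he0m.2)) he0m.2 rfl
      refine ⟨⟨(e0.2 : ℕ), lt_of_lt_of_eq e0.2.2 (congrArg n he0m.2)⟩, hek ▸ he0m.1, ?_⟩
      intro e he hej
      rw [← hek]
      exact huniq e (Finset.mem_filter.mpr ⟨he, hej⟩)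
    choose g hg using H
    refine ⟨g, Finset.mem_pi.mpr (fun a h => Finset.mem_univ _), ?_⟩
    ext e
    rw [Finset.mem_image]
    constructor
    · rintro ⟨⟨j, hj⟩, -, rfl⟩
      exact (hg j hj).1
    · intro he
      have hne : e.1 ≠ i := hQ1 e he
      have hj : e.1 ∈ Finset.univ.erase i := Finset.mem_erase.mpr ⟨hne, Finset.mem_univ _⟩
      exact ⟨⟨e.1, hj⟩, Finset.mem_attach _ _, ((hg e.1 hj).2 e he rfl).symm⟩

lemma count_total :
    (Finset.univ.filter
      (fun D : Finset (gluedCycles r n hpos).E => ∃ i, structQ D i)).card =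
      ∑ i, ∏ j ∈ Finset.univ.erase i, n j := by
  have hsplit : Finset.univ.filter
      (fun D : Finset (gluedCycles r n hpos).E => ∃ i, structQ D i) =
      Finset.univ.biUnion (fun i : Fin r =>
        Finset.univ.filter (fun D : Finset (gluedCycles r n hpos).E => structQ D i)) := by
    ext D
    simp only [Finset.mem_filter, Finset.mem_biUnion, Finset.mem_univ, true_and]
  rw [hsplit, Finset.card_biUnion]
  · exact Finset.sum_congr rfl (fun i _ => count_struct_i i)
  · intro i _ i' _ hne
    apply Finset.disjoint_left.mpr
    intro D hD hD'
    replace hD := Finset.mem_filter.mp hD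
    replace hD' := Finset.mem_filter.mp hD'
    obtain ⟨e0, he0⟩ := Finset.card_eq_one.mp (hD.2.2 i' (Ne.symm hne))
    have he0m : e0 ∈ D.filter (fun e => e.1 = i') := by
      rw [he0]; exact Finset.mem_singleton_self e0
    rw [Finset.mem_filter] at he0m
    exact hD'.2.1 e0 he0m.1 he0m.2

end Glued8
/-- For the graph `G` of `r ≥ 2` odd cycles glued at a common vertex, the spanning
subgraphs with all the vertices and `|V|` edges (i.e. whose set `D` of deleted
edges has `r - 1` elements) that are odd saturated forests are exactly the
connected subgraphs obtained by deleting one edge from each of `r - 1` of the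
cycles; and there are exactly `∑ i, ∏ j ≠ i, n j` of them. -/
theorem gluedCycles_odd_saturated_forests (r : ℕ) (hr : 2 ≤ r)
    (n : Fin r → ℕ) (hpos : ∀ j, 0 < n j) (hodd : ∀ j, Odd (n j)) :
    (∀ D : Finset (gluedCycles r n hpos).E, D.card = r - 1 →
      ((((gluedCycles r n hpos).keep Dᶜ).IsOddSaturatedForest) ↔
        (((gluedCycles r n hpos).keep Dᶜ).Preconnected ∧
          ∃ i : Fin r, (∀ e ∈ D, e.1 ≠ i) ∧
            ∀ j, j ≠ i → (D.filter (fun e => e.1 = j)).card = 1))) ∧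
    Nat.card {D : Finset (gluedCycles r n hpos).E //
        D.card = r - 1 ∧ (((gluedCycles r n hpos).keep Dᶜ).IsOddSaturatedForest)} =
      ∑ i, ∏ j ∈ Finset.univ.erase i, n j := by
  constructor
  · intro D hD
    exact main_iff hr hodd D hD
  · have hiff : ∀ D : Finset (gluedCycles r n hpos).E,
        (D.card = r - 1 ∧ ((gluedCycles r n hpos).keep Dᶜ).IsOddSaturatedForest) ↔
          ∃ i : Fin r, structQ D i := main_iff' hr hodd
    rw [Nat.card_congr (Equiv.subtypeEquivRight hiff), Nat.card_eq_fintype_card,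
      Fintype.card_subtype]
    exact count_total
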